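/- arXiv:1308.4557 — 2 statements merged into one kernel-verified Lean document; each statement's English description precedes it below -/
import Mathlib

section
/- In CP*[Rel], the functor F sends a small groupoid G to the pair (Mor(G), ∼) where (a,b) ∼ (c,d) iff a⁻¹b and c⁻¹d are both defined and equal; for this partial equivalence relation ∼ on Mor(G) × Mor(G), the quotient Dom(∼)/∼ is in bijection with Mor(G), via h ↦ [id_{cod(h)}, h]∼ with inverse [g,f]∼ ↦ g⁻¹f. -/
open CategoryTheory

/-- The morphism set of a groupoid. -/
def GrpMor (G : Type*) [Groupoid G] : Type _ := Σ X Y : G, X ⟶ Y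

/-- For morphisms `b : X → Z` and `a : Y → Z` with common codomain
(`h : cod b = cod a`), the morphism `a⁻¹b : X → Y`. -/
def invProd {G : Type*} [Groupoid G] (a b : GrpMor G) (h : b.2.1 = a.2.1) :
    GrpMor G :=
  ⟨b.1, a.1, b.2.2 ≫ eqToHom h ≫ Groupoid.inv a.2.2⟩

/-- The partial equivalence relation `∼` on `Mor(G) × Mor(G)` underlying
`F(G)`: `(a,b) ∼ (c,d)` iff `a⁻¹b` and `c⁻¹d` are both defined (common
codomains) and equal. -/
def FRel (G : Type*) [Groupoid G] : GrpMor G × GrpMor G → GrpMor G × GrpMor G → Prop :=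
  fun p q => ∃ (h1 : p.2.2.1 = p.1.2.1) (h2 : q.2.2.1 = q.1.2.1),
    invProd p.1 p.2 h1 = invProd q.1 q.2 h2

/-- The domain of a partial equivalence relation. -/
def PerDom {X : Type*} (r : X → X → Prop) : Type _ := {x : X // r x x}

/-- The quotient `Dom(∼)/∼`. -/
def PerQuot {X : Type*} (r : X → X → Prop) : Type _ :=
  Quot (fun a b : PerDom r => r a.val b.val)

lemma invProd_id {G : Type*} [Groupoid G] (h : GrpMor G) :
    invProd (⟨h.2.1, h.2.1, 𝟙 h.2.1⟩ : GrpMor G) h rfl = h := by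
  obtain ⟨X, Y, f⟩ := h
  simp [invProd]
  rfl

def eFwd (G : Type*) [Groupoid G] : GrpMor G → PerQuot (FRel G) :=
  fun h => Quot.mk _ ⟨((⟨h.2.1, h.2.1, 𝟙 h.2.1⟩ : GrpMor G), h), ⟨rfl, rfl, rfl⟩⟩

def eBwd (G : Type*) [Groupoid G] : PerQuot (FRel G) → GrpMor G :=
  Quot.lift (fun x => invProd x.val.1 x.val.2 x.property.1)
    (by rintro ⟨a, ha⟩ ⟨b, hb⟩ ⟨h1, h2, he⟩; exact he)

/-- For a small groupoid `G`, the relation `∼` of `F(G)` is a partial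
equivalence relation, and the quotient `Dom(∼)/∼` is in bijection with
`Mor(G)`, via `h ↦ [id_{cod h}, h]∼` with inverse `[g,f]∼ ↦ g⁻¹f`. -/
theorem stmt16 (G : Type*) [Groupoid G] :
    Symmetric (FRel G) ∧ Transitive (FRel G) ∧
    ∃ e : GrpMor G ≃ PerQuot (FRel G),
      (∀ h : GrpMor G, ∃ x : PerDom (FRel G),
        Quot.mk _ x = e h ∧
        x.val = ((⟨h.2.1, h.2.1, 𝟙 h.2.1⟩ : GrpMor G), h)) ∧
      (∀ (x : PerDom (FRel G)) (hc : x.val.2.2.1 = x.val.1.2.1),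
        e.symm (Quot.mk _ x) = invProd x.val.1 x.val.2 hc) := by
  refine ⟨?_, ?_, ?_⟩
  · rintro p q ⟨h1, h2, he⟩; exact ⟨h2, h1, he.symm⟩
  · rintro p q r ⟨h1, h2, he⟩ ⟨h2', h3, he'⟩; exact ⟨h1, h3, he.trans he'⟩
  · refine ⟨⟨eFwd G, eBwd G, ?_, ?_⟩, ?_, ?_⟩
    · intro h
      show invProd _ _ _ = h
      exact invProd_id h
    · rintro x
      induction x using Quot.ind with
      | _ x =>
        obtain ⟨⟨a, b⟩, h1, h2, he⟩ := x
        apply Quot.sound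
        exact ⟨rfl, h1, invProd_id _⟩
    · intro h
      exact ⟨⟨((⟨h.2.1, h.2.1, 𝟙 h.2.1⟩ : GrpMor G), h), ⟨rfl, rfl, rfl⟩⟩, rfl, rfl⟩
    · intro x hc
      rfl
end

section
/- Let X = {0,1,2} and let ∼ be the partial equivalence relation on X×X relating each of (0,0),(1,1),(2,2),(0,1),(1,0),(1,2),(2,1) to itself and nothing else. Then ∼ satisfies the CPM-compatibility condition ((x,x')∼(y,y') implies (x',x)∼(y',y) and (x,x)∼(y,y)), but there is no small groupoid G with exactly 3 objects and 7 morphisms whose identity-and-inverse structure is compatible with ∼ via a bijection β : Mor(G) → Dom(∼)/∼ satisfying: β(g) = [x,x']∼ implies β(g⁻¹) = [x',x]∼ and β(id_{dom(g)}) = [x,x]∼. -/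
open CategoryTheory

/-- The inverse of a groupoid morphism. -/
def grpInv (G : Type*) [Groupoid G] (f : GrpMor G) : GrpMor G :=
  ⟨f.2.1, f.1, Groupoid.inv f.2.2⟩

/-- The identity on the domain of a groupoid morphism. -/
def grpIdDom (G : Type*) [Groupoid G] (f : GrpMor G) : GrpMor G :=
  ⟨f.1, f.1, 𝟙 f.1⟩

/-- The partial equivalence relation `∼` on `{0,1,2} × {0,1,2}` relating each
of `(0,0),(1,1),(2,2),(0,1),(1,0),(1,2),(2,1)` to itself and nothing else. -/
def sRel : Fin 3 × Fin 3 → Fin 3 × Fin 3 → Prop := fun p q =>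
  p = q ∧ p ∈ ({(0,0), (1,1), (2,2), (0,1), (1,0), (1,2), (2,1)} :
    Set (Fin 3 × Fin 3))

namespace Stmt17Aux

def qval : PerQuot sRel → Fin 3 × Fin 3 := Quot.lift Subtype.val (fun _ _ h => h.1)

lemma qval_prop (q : PerQuot sRel) : sRel (qval q) (qval q) := by
  induction q using Quot.ind with
  | _ a => exact a.property

lemma qmk_qval (q : PerQuot sRel) :
    q = Quot.mk _ (⟨qval q, qval_prop q⟩ : PerDom sRel) := by
  induction q using Quot.ind with
  | _ a => rfl

lemma qval_inj {q q' : PerQuot sRel} (h : qval q = qval q') : q = q' := by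
  rw [qmk_qval q, qmk_qval q']
  congr 1
  exact Subtype.ext h

end Stmt17Aux

open Stmt17Aux
/-- `∼` is a partial equivalence relation satisfying the CPM-compatibility
condition, but no small groupoid with exactly 3 objects and 7 morphisms has its
identity-and-inverse structure compatible with `∼` via a bijection
`β : Mor(G) → Dom(∼)/∼`. -/
theorem stmt17 :
    Symmetric sRel ∧ Transitive sRel ∧
    (∀ x x' y y' : Fin 3, sRel (x, x') (y, y') →
      sRel (x', x) (y', y) ∧ sRel (x, x) (y, y)) ∧
    ¬ ∃ (G : Type) (instG : Groupoid G)
        (β : @GrpMor G instG ≃ PerQuot sRel),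
        Nat.card G = 3 ∧ Nat.card (@GrpMor G instG) = 7 ∧
        (∀ (g : @GrpMor G instG) (x x' : Fin 3) (h : sRel (x, x') (x, x')),
          β g = Quot.mk _ (⟨(x, x'), h⟩ : PerDom sRel) →
            (∃ h' : sRel (x', x) (x', x),
              β (@grpInv G instG g) = Quot.mk _ (⟨(x', x), h'⟩ : PerDom sRel)) ∧
            (∃ h'' : sRel (x, x) (x, x),
              β (@grpIdDom G instG g) = Quot.mk _ (⟨(x, x), h''⟩ : PerDom sRel))) := by
  refine ⟨?_, ?_, ?_, ?_⟩
  · rintro p q ⟨rfl, hm⟩; exact ⟨rfl, hm⟩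
  · rintro p q r ⟨rfl, hm⟩ ⟨rfl, -⟩; exact ⟨rfl, hm⟩
  · rintro x x' y y' ⟨heq, hm⟩
    obtain ⟨rfl, rfl⟩ := Prod.ext_iff.mp heq
    simp only [Set.mem_insert_iff, Set.mem_singleton_iff, Prod.mk.injEq] at hm ⊢
    refine ⟨⟨rfl, ?_⟩, rfl, ?_⟩ <;> fin_cases x <;> fin_cases x' <;> simp_all
  · rintro ⟨G, instG, β, -, -, hcomp⟩
    have key : ∀ g : GrpMor G,
        qval (β (grpInv G g)) = ((qval (β g)).2, (qval (β g)).1) ∧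
        qval (β (grpIdDom G g)) = ((qval (β g)).1, (qval (β g)).1) := by
      intro g
      have h := hcomp g (qval (β g)).1 (qval (β g)).2 (qval_prop (β g)) (qmk_qval (β g))
      refine ⟨?_, ?_⟩
      · obtain ⟨h', e⟩ := h.1; rw [e]; rfl
      · obtain ⟨h'', e⟩ := h.2; rw [e]; rfl
    have hmor : ∀ g : GrpMor G,
        qval (β g) = ((qval (β ⟨g.1, g.1, 𝟙 g.1⟩)).1, (qval (β ⟨g.2.1, g.2.1, 𝟙 g.2.1⟩)).1) := by
      intro g
      have k2 : qval (β ⟨g.1, g.1, 𝟙 g.1⟩) = ((qval (β g)).1, (qval (β g)).1) :=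
        (key g).2
      have k1 : qval (β (grpInv G g)) = ((qval (β g)).2, (qval (β g)).1) := (key g).1
      have k3 : qval (β ⟨g.2.1, g.2.1, 𝟙 g.2.1⟩) =
          ((qval (β (grpInv G g))).1, (qval (β (grpInv G g))).1) := (key (grpInv G g)).2
      have h2 : (qval (β ⟨g.2.1, g.2.1, 𝟙 g.2.1⟩)).1 = (qval (β g)).2 := by
        simp only [k3, k1]
      rw [k2, h2]
    have finj : ∀ A B : G,
        (qval (β ⟨A, A, 𝟙 A⟩)).1 = (qval (β ⟨B, B, 𝟙 B⟩)).1 → A = B := by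
      intro A B h
      have hA := hmor ⟨A, A, 𝟙 A⟩
      have hB := hmor ⟨B, B, 𝟙 B⟩
      have : qval (β ⟨A, A, 𝟙 A⟩) = qval (β ⟨B, B, 𝟙 B⟩) := by
        rw [hA, hB, h]
      exact congrArg Sigma.fst (β.injective (qval_inj this))
    have hsurj : ∀ p : Fin 3 × Fin 3, sRel p p → ∃ g : GrpMor G, qval (β g) = p := by
      intro p hp
      obtain ⟨g, hg⟩ := β.surjective (Quot.mk _ (⟨p, hp⟩ : PerDom sRel))
      exact ⟨g, by rw [hg]; rfl⟩
    obtain ⟨a, ha⟩ := hsurj (0, 1) ⟨rfl, by simp⟩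
    obtain ⟨b, hb⟩ := hsurj (1, 2) ⟨rfl, by simp⟩
    have ha' := (hmor a).symm.trans ha
    have hb' := (hmor b).symm.trans hb
    obtain ⟨A1, A2, am⟩ := a
    obtain ⟨B1, B2, bm⟩ := b
    simp only [Prod.mk.injEq] at ha' hb'
    have hAB : A2 = B1 := finj _ _ (by rw [ha'.2, hb'.1])
    subst hAB
    have hc := qval_prop (β ⟨A1, B2, am ≫ bm⟩)
    rw [hmor ⟨A1, B2, am ≫ bm⟩] at hc
    have h02 : qval (β (⟨A1, A2, am⟩ : GrpMor G)) = ((0 : Fin 3), (1 : Fin 3)) := ha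
    have hval : ((qval (β ⟨A1, A1, 𝟙 A1⟩)).1, (qval (β ⟨B2, B2, 𝟙 B2⟩)).1)
        = ((0 : Fin 3), (2 : Fin 3)) := by
      rw [ha'.1, hb'.2]
    rw [hval] at hc
    have := hc.2
    simp only [Set.mem_insert_iff, Set.mem_singleton_iff, Prod.mk.injEq] at this
    revert this
    decide
end
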